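/- arXiv:math/0601751 — 4 statements merged into one kernel-verified Lean document; each statement's English description precedes it below -/
import Mathlib

section
/- Let n ≥ 3, let U ⊆ ℝⁿ be open, and let σ be a smooth map from U to 2-forms satisfying the flat conformal Killing equation (k = 2). Define the vector field (as a 1-form) v(x)(a) := Σ_{p=1}^{n} (Dσ(x)eₚ)(a,eₚ). Then v is a Killing field for the Euclidean metric: for all x ∈ U and all u, w ∈ ℝⁿ, (Dv(x)u)(w) + (Dv(x)w)(u) = 0. -/
open scoped RealInnerProductSpace BigOperators

noncomputable section

/-- Euclidean `n`-space. -/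
abbrev Euc (n : ℕ) : Type := EuclideanSpace ℝ (Fin n)

/-- Continuous `k`-linear maps `(ℝⁿ)ᵏ → ℝ`. -/
abbrev FormML (n k : ℕ) : Type :=
  ContinuousMultilinearMap ℝ (fun _ : Fin k => Euc n) ℝ

/-- A multilinear map is alternating (vanishes when two arguments coincide);
together with multilinearity this makes it a `k`-form. -/
def IsAlt {n k : ℕ} (f : FormML n k) : Prop :=
  ∀ (v : Fin k → Euc n) (i j : Fin k), i ≠ j → v i = v j → f v = 0

/-- The tuple `a` with its `i`-th entry omitted. -/
def omitArg {X : Type*} {k : ℕ} (i : Fin k) (a : Fin k → X) (j : Fin (k - 1)) : X :=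
  if (j : ℕ) < (i : ℕ) then a ⟨j, by have := j.isLt; have := i.isLt; omega⟩
  else a ⟨(j : ℕ) + 1, by have := j.isLt; omega⟩

/-- The tuple `(c, d₁, …, d_{k-1})`. -/
def consCast {X : Type*} {k : ℕ} (c : X) (d : Fin (k - 1) → X) (j : Fin k) : X :=
  if h : (j : ℕ) = 0 then c else d ⟨(j : ℕ) - 1, by have := j.isLt; omega⟩

/-- The flat (Euclidean) conformal Killing equation on `k`-forms:
`σ` is smooth on `U`, valued in alternating maps, and there are smooth form-valued
`τ` (degree `k-1`) and `ρ` (degree `k+1`) with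
`(Dσ(x)c)(a₁,…,a_k) = Σᵢ (-1)^(i+1) ⟨c,aᵢ⟩ τ(x)(a₁,…,âᵢ,…,a_k) + ρ(x)(c,a₁,…,a_k)`. -/
def FlatCKF (n k : ℕ) (U : Set (Euc n)) (σ : Euc n → FormML n k) : Prop :=
  ContDiffOn ℝ (⊤ : ℕ∞) σ U ∧ (∀ x ∈ U, IsAlt (σ x)) ∧
  ∃ (τ : Euc n → FormML n (k - 1)) (ρ : Euc n → FormML n (k + 1)),
    ContDiffOn ℝ (⊤ : ℕ∞) τ U ∧ ContDiffOn ℝ (⊤ : ℕ∞) ρ U ∧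
    (∀ x ∈ U, IsAlt (τ x)) ∧ (∀ x ∈ U, IsAlt (ρ x)) ∧
    ∀ x ∈ U, ∀ (c : Euc n) (a : Fin k → Euc n),
      (fderiv ℝ σ x c) a =
        (∑ i : Fin k, (-1 : ℝ) ^ (i : ℕ) * ⟪c, a i⟫ * τ x (omitArg i a))
        + ρ x (consCast c a)


namespace CKF
variable {n : ℕ}

lemma fderiv_ml_apply {k : ℕ} {f : Euc n → FormML n k} {x : Euc n}
    (hf : DifferentiableAt ℝ f x) (z : Fin k → Euc n) (b : Euc n) :
    fderiv ℝ (fun y => f y z) x b = (fderiv ℝ f x b) z := by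
  have h : HasFDerivAt (fun y => f y z)
      ((ContinuousMultilinearMap.apply ℝ (fun _ : Fin k => Euc n) ℝ z).comp (fderiv ℝ f x)) x :=
    ((ContinuousMultilinearMap.apply ℝ (fun _ : Fin k => Euc n) ℝ z).hasFDerivAt).comp x
      hf.hasFDerivAt
  rw [h.fderiv]; rfl

lemma hasFDerivAt_ml_apply {k : ℕ} {f : Euc n → FormML n k} {x : Euc n}
    (hf : DifferentiableAt ℝ f x) (z : Fin k → Euc n) :
    HasFDerivAt (fun y => f y z)
      ((ContinuousMultilinearMap.apply ℝ (fun _ : Fin k => Euc n) ℝ z).comp (fderiv ℝ f x)) x :=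
  ((ContinuousMultilinearMap.apply ℝ (fun _ : Fin k => Euc n) ℝ z).hasFDerivAt).comp x
    hf.hasFDerivAt

lemma fderiv_isAlt {k : ℕ} {f : Euc n → FormML n k} {x : Euc n} {U : Set (Euc n)}
    (hU : IsOpen U) (hx : x ∈ U) (hf : DifferentiableAt ℝ f x)
    (halt : ∀ y ∈ U, IsAlt (f y)) (b : Euc n) : IsAlt (fderiv ℝ f x b) := by
  intro z i j hij hz
  rw [← fderiv_ml_apply hf z b]
  have h0 : (fun y => f y z) =ᶠ[nhds x] (fun _ => (0 : ℝ)) :=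
    Filter.eventuallyEq_of_mem (hU.mem_nhds hx) (fun y hy => halt y hy z i j hij hz)
  rw [h0.fderiv_eq, fderiv_fun_const]
  rfl

lemma update0 (x b y z : Euc n) :
    Function.update (![x, b, y] : Fin 3 → Euc n) 0 z = ![z, b, y] := by
  funext i; fin_cases i <;> simp [Function.update]

lemma update2 (x b y z : Euc n) :
    Function.update (![x, b, y] : Fin 3 → Euc n) 2 z = ![x, b, z] := by
  funext i; fin_cases i <;> simp [Function.update]

lemma alt_swap02 (f : FormML n 3) (hf : IsAlt f) (a b c : Euc n) :
    f ![a, b, c] = - f ![c, b, a] := by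
  have hadd0 : ∀ x x' y : Euc n, f ![x + x', b, y] = f ![x, b, y] + f ![x', b, y] := by
    intro x x' y
    have := f.map_update_add ![x, b, y] 0 x x'
    rwa [update0, update0, update0] at this
  have hadd2 : ∀ x y y' : Euc n, f ![x, b, y + y'] = f ![x, b, y] + f ![x, b, y'] := by
    intro x y y'
    have := f.map_update_add ![x, b, y] 2 y y'
    rwa [update2, update2, update2] at this
  have h0 : f ![a + c, b, a + c] = 0 := hf _ 0 2 (by decide) (by simp)
  have haa : f ![a, b, a] = 0 := hf _ 0 2 (by decide) (by simp)
  have hcc : f ![c, b, c] = 0 := hf _ 0 2 (by decide) (by simp)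
  have h1 := hadd0 a c (a + c)
  rw [hadd2 a a c, hadd2 c a c, haa, hcc, h0] at h1
  linarith

lemma euclid_decomp (w : Euc n) :
    ∑ p : Fin n, w p • EuclideanSpace.single p (1 : ℝ) = w := by
  ext q
  have h : (∑ p : Fin n, w p • EuclideanSpace.single p (1 : ℝ)) q
      = ∑ p : Fin n, (w p • EuclideanSpace.single p (1 : ℝ)) q :=
    by rw [WithLp.ofLp_sum]; exact Finset.sum_apply q Finset.univ _
  rw [h]
  simp [EuclideanSpace.single_apply]

lemma oneform_sum (f : FormML n 1) (w : Euc n) :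
    ∑ p : Fin n, w p * f (fun _ => EuclideanSpace.single p (1 : ℝ)) = f (fun _ => w) := by
  have hL : ∀ z : Euc n, continuousMultilinearCurryFin1 ℝ (Euc n) ℝ f z = f (fun _ => z) := by
    intro z
    rw [continuousMultilinearCurryFin1_apply]
    congr 1
  calc ∑ p : Fin n, w p * f (fun _ => EuclideanSpace.single p (1 : ℝ))
      = ∑ p : Fin n, w p • continuousMultilinearCurryFin1 ℝ (Euc n) ℝ f
          (EuclideanSpace.single p (1 : ℝ)) := by
        simp only [hL, smul_eq_mul]
    _ = continuousMultilinearCurryFin1 ℝ (Euc n) ℝ f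
          (∑ p : Fin n, w p • EuclideanSpace.single p (1 : ℝ)) := by
        rw [map_sum]
        simp only [map_smul]
    _ = f (fun _ => w) := by rw [euclid_decomp, hL]

lemma clm_decomp {F : Type*} [NormedAddCommGroup F] [NormedSpace ℝ F]
    (G : Euc n →L[ℝ] F) (c : Euc n) :
    ∑ p : Fin n, c p • G (EuclideanSpace.single p (1 : ℝ)) = G c := by
  conv_rhs => rw [← euclid_decomp c]
  rw [map_sum]
  simp only [map_smul]

lemma clm_ml_decomp (G : Euc n →L[ℝ] FormML n 1) (c : Euc n) (m : Fin 1 → Euc n) :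
    ∑ p : Fin n, c p * (G (EuclideanSpace.single p (1 : ℝ))) m = (G c) m := by
  rw [← clm_decomp G c, ContinuousMultilinearMap.sum_apply]
  simp only [ContinuousMultilinearMap.smul_apply, smul_eq_mul]

lemma omit0 (a0 a1 : Euc n) :
    omitArg (0 : Fin 2) ![a0, a1] = (fun _ : Fin (2 - 1) => a1) := by
  funext j
  have hj : j = ⟨0, by norm_num⟩ := Fin.ext (by omega)
  subst hj
  rfl

lemma omit1 (a0 a1 : Euc n) :
    omitArg (1 : Fin 2) ![a0, a1] = (fun _ : Fin (2 - 1) => a0) := by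
  funext j
  have hj : j = ⟨0, by norm_num⟩ := Fin.ext (by omega)
  subst hj
  rfl

lemma fderiv_clm_apply_const {F G : Type*} [NormedAddCommGroup F] [NormedSpace ℝ F]
    [NormedAddCommGroup G] [NormedSpace ℝ G]
    {f : Euc n → (F →L[ℝ] G)} {x : Euc n} (hf : DifferentiableAt ℝ f x) (c : F) (b : Euc n) :
    fderiv ℝ (fun y => f y c) x b = (fderiv ℝ f x b) c := by
  have h : HasFDerivAt (fun y => f y c)
      ((ContinuousLinearMap.apply ℝ G c).comp (fderiv ℝ f x)) x :=
    ((ContinuousLinearMap.apply ℝ G c).hasFDerivAt).comp x hf.hasFDerivAt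
  rw [h.fderiv]; rfl

lemma cons2 (c a0 a1 : Euc n) :
    consCast c ![a0, a1] = ![c, a0, a1] := by
  funext j
  fin_cases j <;> rfl

end CKF

open CKF


/-- If `σ` is a flat conformal Killing 2-form on an open `U ⊆ ℝⁿ`, the
vector field (1-form) `v(x)(a) = Σₚ (Dσ(x)eₚ)(a,eₚ)` is a Killing field for the
Euclidean metric: `(Dv(x)u)(w) + (Dv(x)w)(u) = 0`. -/
theorem flat_conformal_killing_two_form_gives_Killing_field
    (n : ℕ) (hn : 3 ≤ n)
    (U : Set (Euc n)) (hU : IsOpen U)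
    (σ : Euc n → FormML n 2) (hσ : FlatCKF n 2 U σ) :
    ∀ x ∈ U, ∀ u w : Euc n,
      fderiv ℝ
        (fun y => ∑ p : Fin n,
          (fderiv ℝ σ y (EuclideanSpace.single p (1 : ℝ)))
            ![w, EuclideanSpace.single p (1 : ℝ)]) x u
      + fderiv ℝ
        (fun y => ∑ p : Fin n,
          (fderiv ℝ σ y (EuclideanSpace.single p (1 : ℝ)))
            ![u, EuclideanSpace.single p (1 : ℝ)]) x w = 0 := by
  intro x hx u w
  obtain ⟨hσsm, hσalt, τ, ρ, hτsm, hρsm, hτalt, hρalt, hkey⟩ := hσ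
  have hUx : U ∈ nhds x := hU.mem_nhds hx
  have hone : (1 : WithTop ℕ∞) ≤ ((⊤ : ℕ∞) : WithTop ℕ∞) := by exact_mod_cast le_top
  have hτd : DifferentiableAt ℝ τ x := (hτsm.contDiffAt hUx).differentiableAt (by simp)
  have hρd : DifferentiableAt ℝ ρ x := (hρsm.contDiffAt hUx).differentiableAt (by simp)
  have hσ2 : ContDiffOn ℝ 2 σ U := hσsm.of_le (WithTop.coe_le_coe.mpr le_top)
  have hσ' : ContDiffOn ℝ 1 (fderiv ℝ σ) U := hσ2.fderiv_of_isOpen hU (by norm_num)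
  have hσ'd : DifferentiableAt ℝ (fderiv ℝ σ) x := (hσ'.contDiffAt hUx).differentiableAt one_ne_zero
  -- notation
  set e : Fin n → Euc n := fun p => EuclideanSpace.single p (1 : ℝ) with he
  set T : Euc n → Euc n → ℝ := fun b z => (fderiv ℝ τ x b) (fun _ => z) with hT
  set Rm : Euc n → (Fin 3 → Euc n) → ℝ := fun b z => (fderiv ℝ ρ x b) z with hRm
  -- Step A: differentiated CKF identity
  have hA : ∀ (b c : Euc n) (a : Fin 2 → Euc n),
      ((fderiv ℝ (fderiv ℝ σ) x b) c) a =
        (∑ i : Fin 2, (-1 : ℝ) ^ (i : ℕ) * ⟪c, a i⟫ * (fderiv ℝ τ x b) (omitArg i a))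
        + (fderiv ℝ ρ x b) (consCast c a) := by
    intro b c a
    have hfc : DifferentiableAt ℝ (fun y => fderiv ℝ σ y c) x :=
      hσ'd.clm_apply (differentiableAt_const c)
    have hR : HasFDerivAt
        (fun y => (∑ i : Fin 2, (-1 : ℝ) ^ (i : ℕ) * ⟪c, a i⟫ * τ y (omitArg i a))
            + ρ y (consCast c a))
        ((∑ i : Fin 2, ((-1 : ℝ) ^ (i : ℕ) * ⟪c, a i⟫) •
            ((ContinuousMultilinearMap.apply ℝ (fun _ : Fin (2-1) => Euc n) ℝ
              (omitArg i a)).comp (fderiv ℝ τ x)))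
          + (ContinuousMultilinearMap.apply ℝ (fun _ : Fin (2+1) => Euc n) ℝ
              (consCast c a)).comp (fderiv ℝ ρ x)) x := by
      apply HasFDerivAt.add
      · apply HasFDerivAt.fun_sum
        intro i _
        exact (hasFDerivAt_ml_apply hτd _).const_mul _
      · exact hasFDerivAt_ml_apply hρd _
    have heq : (fun y => (fderiv ℝ σ y c) a) =ᶠ[nhds x]
        (fun y => (∑ i : Fin 2, (-1 : ℝ) ^ (i : ℕ) * ⟪c, a i⟫ * τ y (omitArg i a))
            + ρ y (consCast c a)) :=
      Filter.eventuallyEq_of_mem hUx (fun y hy => hkey y hy c a)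
    have e1 : fderiv ℝ (fun y => fderiv ℝ σ y c) x b = (fderiv ℝ (fderiv ℝ σ) x b) c :=
      fderiv_clm_apply_const hσ'd c b
    have e2 : fderiv ℝ (fun y => (fderiv ℝ σ y c) a) x b
        = (fderiv ℝ (fun y => fderiv ℝ σ y c) x b) a := fderiv_ml_apply hfc a b
    rw [← e1, ← e2, heq.fderiv_eq, hR.fderiv]
    simp [ContinuousLinearMap.sum_apply, mul_assoc]
  -- symmetry of second derivative
  have hsymm : ∀ b c : Euc n,
      fderiv ℝ (fderiv ℝ σ) x b c = fderiv ℝ (fderiv ℝ σ) x c b := by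
    intro b c
    apply second_derivative_symmetric_of_eventually (f := σ) ?_ hσ'd.hasFDerivAt b c
    filter_upwards [hUx] with y hy
    exact ((hσsm.contDiffAt (hU.mem_nhds hy)).differentiableAt (by simp)).hasFDerivAt
  have hRalt : ∀ b : Euc n, IsAlt (fderiv ℝ ρ x b) :=
    fun b => fderiv_isAlt hU hx hρd hρalt b
  -- per-p equation
  have hp : ∀ (p : Fin n) (c z : Euc n),
      ⟪c, e p⟫ * T (e p) z - ⟪c, z⟫ * T (e p) (e p) + Rm (e p) ![c, e p, z]
        = T c z - ⟪e p, z⟫ * T c (e p) := by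
    intro p c z
    have h1 := hA (e p) c ![e p, z]
    have h2 := hA c (e p) ![e p, z]
    rw [hsymm (e p) c] at h1
    rw [h2] at h1
    have hz : (fderiv ℝ ρ x c) ![e p, e p, z] = 0 :=
      hRalt c ![e p, e p, z] 0 1 (by decide) (by simp)
    rw [Fin.sum_univ_two, Fin.sum_univ_two] at h1
    simp only [Matrix.cons_val_zero, Matrix.cons_val_one, Matrix.head_cons,
      omit0, omit1, cons2, Fin.val_zero, Fin.val_one, pow_zero, pow_one, one_mul,
      neg_one_mul, hz, add_zero] at h1
    have hpp : ⟪e p, e p⟫ = (1 : ℝ) := by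
      simp [he, EuclideanSpace.inner_single_left, EuclideanSpace.single_apply]
    rw [hpp] at h1
    simp only [hT, hRm]
    linarith [h1]
  -- summed identity
  have hsum : ∀ c z : Euc n,
      T c z - ⟪c, z⟫ * (∑ p : Fin n, T (e p) (e p)) + (∑ p : Fin n, Rm (e p) ![c, e p, z])
        = (n : ℝ) * T c z - T c z := by
    intro c z
    have h1 : ∑ p : Fin n,
        (⟪c, e p⟫ * T (e p) z - ⟪c, z⟫ * T (e p) (e p) + Rm (e p) ![c, e p, z])
        = ∑ p : Fin n, (T c z - ⟪e p, z⟫ * T c (e p)) :=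
      Finset.sum_congr rfl (fun p _ => hp p c z)
    have hL : ∑ p : Fin n,
        (⟪c, e p⟫ * T (e p) z - ⟪c, z⟫ * T (e p) (e p) + Rm (e p) ![c, e p, z])
        = T c z - ⟪c, z⟫ * (∑ p : Fin n, T (e p) (e p)) + (∑ p : Fin n, Rm (e p) ![c, e p, z]) := by
      rw [Finset.sum_add_distrib, Finset.sum_sub_distrib, ← Finset.mul_sum]
      congr 2
      have hc : ∀ p : Fin n, ⟪c, e p⟫ * T (e p) z
          = c p * ((fderiv ℝ τ x (e p)) (fun _ => z)) := by
        intro p; simp [hT, he, EuclideanSpace.inner_single_right]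
      rw [Finset.sum_congr rfl (fun p _ => hc p)]
      exact clm_ml_decomp (fderiv ℝ τ x) c _
    have hR : ∑ p : Fin n, (T c z - ⟪e p, z⟫ * T c (e p)) = (n : ℝ) * T c z - T c z := by
      rw [Finset.sum_sub_distrib, Finset.sum_const, Finset.card_univ, Fintype.card_fin]
      congr 1
      · simp [nsmul_eq_mul]
      · have hz : ∀ p : Fin n, ⟪e p, z⟫ * T c (e p)
            = z p * ((fderiv ℝ τ x c) (fun _ => e p)) := by
          intro p; simp [hT, he, EuclideanSpace.inner_single_left]
        rw [Finset.sum_congr rfl (fun p _ => hz p)]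
        exact oneform_sum (fderiv ℝ τ x c) z
    rw [← hL, h1, hR]
  -- antisymmetry of the Q-term
  have hQQ : ∀ c z : Euc n,
      (∑ p : Fin n, Rm (e p) ![c, e p, z]) = - ∑ p : Fin n, Rm (e p) ![z, e p, c] := by
    intro c z
    rw [← Finset.sum_neg_distrib]
    exact Finset.sum_congr rfl fun p _ =>
      alt_swap02 (fderiv ℝ ρ x (e p)) (hRalt (e p)) c (e p) z
  have hn' : (3 : ℝ) ≤ (n : ℝ) := by exact_mod_cast hn
  -- vanishing of the trace
  have htr0 : (∑ p : Fin n, T (e p) (e p)) = 0 := by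
    have hz : ∀ q : Fin n, (∑ p : Fin n, Rm (e p) ![e q, e p, e q]) = 0 := by
      intro q
      apply Finset.sum_eq_zero
      intro p _
      exact hRalt (e p) ![e q, e p, e q] 0 2 (by decide) (by simp)
    have hqq : ∀ q : Fin n, ⟪e q, e q⟫ = (1 : ℝ) := by
      intro q; simp [he, EuclideanSpace.inner_single_left, EuclideanSpace.single_apply]
    have hper : ∀ q : Fin n,
        T (e q) (e q) - (∑ p : Fin n, T (e p) (e p))
          = (n : ℝ) * T (e q) (e q) - T (e q) (e q) := by
      intro q
      have h := hsum (e q) (e q)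
      rw [hqq q, one_mul, hz q, add_zero] at h
      exact h
    have hsumq : ∑ q : Fin n, (T (e q) (e q) - (∑ p : Fin n, T (e p) (e p)))
        = ∑ q : Fin n, ((n : ℝ) * T (e q) (e q) - T (e q) (e q)) :=
      Finset.sum_congr rfl fun q _ => hper q
    rw [Finset.sum_sub_distrib, Finset.sum_sub_distrib, ← Finset.mul_sum, Finset.sum_const,
      Finset.card_univ, Fintype.card_fin, nsmul_eq_mul] at hsumq
    have h2 : ((2 : ℝ) * (n : ℝ) - 2) * (∑ p : Fin n, T (e p) (e p)) = 0 := by ring_nf; ring_nf at hsumq; linarith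
    rcases mul_eq_zero.mp h2 with h | h
    · linarith
    · exact h
  -- antisymmetry of T
  have hTanti : ∀ c z : Euc n, T c z + T z c = 0 := by
    intro c z
    have h1 := hsum c z
    have h2 := hsum z c
    rw [htr0, mul_zero, sub_zero] at h1 h2
    have hq := hQQ c z
    have h3 : ((n : ℝ) - 2) * (T c z + T z c) = 0 := by linarith
    rcases mul_eq_zero.mp h3 with h | h
    · linarith
    · exact h
  -- derivative of the vector field
  have hv : ∀ u' w' : Euc n,
      fderiv ℝ (fun y => ∑ p : Fin n,
          (fderiv ℝ σ y (EuclideanSpace.single p (1 : ℝ)))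
            ![w', EuclideanSpace.single p (1 : ℝ)]) x u'
        = (1 - (n : ℝ)) * T u' w' := by
    intro u' w'
    have hfun : ∀ y ∈ U,
        (∑ p : Fin n, (fderiv ℝ σ y (EuclideanSpace.single p (1 : ℝ)))
            ![w', EuclideanSpace.single p (1 : ℝ)])
          = (1 - (n : ℝ)) * τ y (fun _ => w') := by
      intro y hy
      have hterm : ∀ p : Fin n,
          (fderiv ℝ σ y (EuclideanSpace.single p (1 : ℝ)))
              ![w', EuclideanSpace.single p (1 : ℝ)]
            = w' p * τ y (fun _ => EuclideanSpace.single p (1 : ℝ)) - τ y (fun _ => w') := by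
        intro p
        have hk := hkey y hy (EuclideanSpace.single p (1 : ℝ))
          ![w', EuclideanSpace.single p (1 : ℝ)]
        have hρ0 : ρ y (consCast (EuclideanSpace.single p (1 : ℝ))
            ![w', EuclideanSpace.single p (1 : ℝ)]) = 0 := by
          rw [cons2]
          exact hρalt y hy _ 0 2 (by decide) (by simp)
        rw [Fin.sum_univ_two] at hk
        simp only [Matrix.cons_val_zero, Matrix.cons_val_one, Matrix.head_cons, omit0, omit1,
          Fin.val_zero, Fin.val_one, pow_zero, pow_one, one_mul, neg_one_mul, hρ0,
          add_zero] at hk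
        rw [hk]
        have h1 : ⟪EuclideanSpace.single p (1 : ℝ), w'⟫ = w' p := by
          simp [EuclideanSpace.inner_single_left]
        have h2 : ⟪EuclideanSpace.single p (1 : ℝ), EuclideanSpace.single p (1 : ℝ)⟫ = (1 : ℝ) := by
          simp [EuclideanSpace.inner_single_left, EuclideanSpace.single_apply]
        rw [h1, h2]
        ring
      rw [Finset.sum_congr rfl (fun p _ => hterm p), Finset.sum_sub_distrib,
        oneform_sum (τ y) w', Finset.sum_const, Finset.card_univ, Fintype.card_fin,
        nsmul_eq_mul]
      ring
    have heq2 : (fun y => ∑ p : Fin n,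
        (fderiv ℝ σ y (EuclideanSpace.single p (1 : ℝ)))
          ![w', EuclideanSpace.single p (1 : ℝ)]) =ᶠ[nhds x]
        (fun y => (1 - (n : ℝ)) * τ y (fun _ => w')) :=
      Filter.eventuallyEq_of_mem hUx hfun
    rw [heq2.fderiv_eq]
    have hD := (hasFDerivAt_ml_apply hτd (fun _ => w')).const_mul (1 - (n : ℝ))
    rw [hD.fderiv]
    simp [hT]
  rw [hv u w, hv w u]
  have h := hTanti u w
  have hwu : T w u = - T u w := by linarith
  rw [hwu]
  ring
end
end

section
/- Let n ≥ 3, let U ⊆ ℝⁿ be open, and let σ and σ′ be two smooth maps from U to 1-forms, each satisfying the flat conformal Killing equation with k = 1. Define S(x)(a,b) := σ(x)(a)σ′(x)(b) + σ(x)(b)σ′(x)(a). Then there exists a smooth map λ from U to linear functionals on ℝⁿ such that for all x ∈ U and all a, b, c ∈ ℝⁿ: (DS(x)a)(b,c) + (DS(x)b)(c,a) + (DS(x)c)(a,b) = ⟨a,b⟩λ(x)(c) + ⟨b,c⟩λ(x)(a) + ⟨c,a⟩λ(x)(b); that is, the symmetric product of two conformal Killing 1-forms is (after removing the trace) a conformal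 Killing 2-tensor. (This is the Euclidean, m = 2, rank-(1,1) instance of the theorem producing conformal Killing tensors from collections of conformal Killing forms.) -/
open scoped RealInnerProductSpace BigOperators

noncomputable section

lemma upd0 {n : ℕ} (x z w : Euc n) : Function.update ![x, z] 0 w = ![w, z] := by
  funext j; fin_cases j <;> simp [Function.update]
lemma upd1 {n : ℕ} (x z w : Euc n) : Function.update ![x, z] 1 w = ![x, w] := by
  funext j; fin_cases j <;> simp [Function.update]

lemma alt2_antisymm {n : ℕ} (f : FormML n 2) (hf : IsAlt f) (a b : Euc n) :
    f ![b, a] = - f ![a, b] := by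
  have add0 : ∀ x y z : Euc n, f ![x + y, z] = f ![x, z] + f ![y, z] := by
    intro x y z
    have := f.map_update_add ![x, z] 0 x y
    rwa [upd0, upd0, upd0] at this
  have add1 : ∀ x y z : Euc n, f ![z, x + y] = f ![z, x] + f ![z, y] := by
    intro x y z
    have := f.map_update_add ![z, x] 1 x y
    rwa [upd1, upd1, upd1] at this
  have hd : ∀ v : Euc n, f ![v, v] = 0 := fun v =>
    hf ![v, v] 0 1 (by decide) rfl
  have h := hd (a + b)
  rw [add0, add1, add1, hd, hd] at h
  linarith

lemma curry1_apply {n : ℕ} (f : FormML n 1) (v : Euc n) :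
    continuousMultilinearCurryFin1 ℝ (Euc n) ℝ f v = f ![v] := by
  show f (Fin.snoc ![] v) = f ![v]
  congr 1; funext j; fin_cases j; simp [Fin.snoc]

lemma consCast_eq {n : ℕ} (c v : Euc n) :
    consCast c ![v] = (![c, v] : Fin 2 → Euc n) := by
  funext j; fin_cases j <;> simp [consCast]

lemma eval_hasFDeriv {n : ℕ} {f : Euc n → FormML n 1} {x : Euc n}
    (hf : DifferentiableAt ℝ f x) (v : Euc n) :
    HasFDerivAt (fun y => f y ![v])
      ((ContinuousMultilinearMap.apply ℝ (fun _ : Fin 1 => Euc n) ℝ ![v]).comp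
        (fderiv ℝ f x)) x :=
  (ContinuousMultilinearMap.apply ℝ (fun _ : Fin 1 => Euc n) ℝ ![v]).hasFDerivAt.comp x
    hf.hasFDerivAt

theorem CKaux_main
    (n : ℕ) (hn : 3 ≤ n)
    (U : Set (Euc n)) (hU : IsOpen U)
    (σ σ' : Euc n → FormML n 1)
    (hσs : ContDiffOn ℝ (⊤ : ℕ∞) σ U) (hσs' : ContDiffOn ℝ (⊤ : ℕ∞) σ' U)
    (τ τ' : Euc n → FormML n 0) (ρ ρ' : Euc n → FormML n 2)
    (hτs : ContDiffOn ℝ (⊤ : ℕ∞) τ U) (hτs' : ContDiffOn ℝ (⊤ : ℕ∞) τ' U)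
    (hρa : ∀ x ∈ U, IsAlt (ρ x)) (hρa' : ∀ x ∈ U, IsAlt (ρ' x))
    (heq : ∀ x ∈ U, ∀ (c : Euc n) (a : Fin 1 → Euc n),
      (fderiv ℝ σ x c) a =
        (∑ i : Fin 1, (-1 : ℝ) ^ (i : ℕ) * ⟪c, a i⟫ * τ x (omitArg i a))
        + ρ x (consCast c a))
    (heq' : ∀ x ∈ U, ∀ (c : Euc n) (a : Fin 1 → Euc n),
      (fderiv ℝ σ' x c) a =
        (∑ i : Fin 1, (-1 : ℝ) ^ (i : ℕ) * ⟪c, a i⟫ * τ' x (omitArg i a))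
        + ρ' x (consCast c a)) :
    ∃ lam : Euc n → (Euc n →L[ℝ] ℝ),
      ContDiffOn ℝ (⊤ : ℕ∞) lam U ∧
      ∀ x ∈ U, ∀ a b c : Euc n,
        fderiv ℝ (fun y => σ y ![b] * σ' y ![c] + σ y ![c] * σ' y ![b]) x a
        + fderiv ℝ (fun y => σ y ![c] * σ' y ![a] + σ y ![a] * σ' y ![c]) x b
        + fderiv ℝ (fun y => σ y ![a] * σ' y ![b] + σ y ![b] * σ' y ![a]) x c
        = ⟪a, b⟫ * lam x c + ⟪b, c⟫ * lam x a + ⟪c, a⟫ * lam x b := by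
  classical
  set E : Fin 0 → Euc n := ![] with hE
  set C : FormML n 1 →L[ℝ] (Euc n →L[ℝ] ℝ) :=
    (continuousMultilinearCurryFin1 ℝ (Euc n) ℝ).toContinuousLinearEquiv.toContinuousLinearMap
      with hC
  refine ⟨fun x => (2 * τ x E) • (C (σ' x)) + (2 * τ' x E) • (C (σ x)), ?_, ?_⟩
  · apply ContDiffOn.add
    · apply ContDiffOn.fun_smul
      · exact (contDiffOn_const (c := (2:ℝ))).mul
          ((ContinuousMultilinearMap.apply ℝ (fun _ : Fin 0 => Euc n) ℝ E).contDiff.comp_contDiffOn hτs)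
      · exact C.contDiff.comp_contDiffOn hσs'
    · apply ContDiffOn.fun_smul
      · exact (contDiffOn_const (c := (2:ℝ))).mul
          ((ContinuousMultilinearMap.apply ℝ (fun _ : Fin 0 => Euc n) ℝ E).contDiff.comp_contDiffOn hτs')
      · exact C.contDiff.comp_contDiffOn hσs
  · intro x hx a b c
    have hdσ : DifferentiableAt ℝ σ x :=
      (hσs.contDiffAt (hU.mem_nhds hx)).differentiableAt (by simp)
    have hdσ' : DifferentiableAt ℝ σ' x :=
      (hσs'.contDiffAt (hU.mem_nhds hx)).differentiableAt (by simp)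
    -- derivative of evaluated maps
    have Dσ : ∀ v d : Euc n, fderiv ℝ (fun y => σ y ![v]) x d = fderiv ℝ σ x d ![v] :=
      fun v d => by rw [(eval_hasFDeriv hdσ v).fderiv]; rfl
    have Dσ' : ∀ v d : Euc n, fderiv ℝ (fun y => σ' y ![v]) x d = fderiv ℝ σ' x d ![v] :=
      fun v d => by rw [(eval_hasFDeriv hdσ' v).fderiv]; rfl
    have dev : ∀ v : Euc n, DifferentiableAt ℝ (fun y => σ y ![v]) x :=
      fun v => (eval_hasFDeriv hdσ v).differentiableAt
    have dev' : ∀ v : Euc n, DifferentiableAt ℝ (fun y => σ' y ![v]) x :=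
      fun v => (eval_hasFDeriv hdσ' v).differentiableAt
    -- product-plus rule
    have prod : ∀ u v d : Euc n,
        fderiv ℝ (fun y => σ y ![u] * σ' y ![v] + σ y ![v] * σ' y ![u]) x d
        = (fderiv ℝ σ x d ![u]) * σ' x ![v] + σ x ![u] * (fderiv ℝ σ' x d ![v])
          + (fderiv ℝ σ x d ![v]) * σ' x ![u] + σ x ![v] * (fderiv ℝ σ' x d ![u]) := by
      intro u v d
      rw [fderiv_fun_add ((dev u).fun_mul (dev' v)) ((dev v).fun_mul (dev' u))]
      rw [fderiv_fun_mul (dev u) (dev' v), fderiv_fun_mul (dev v) (dev' u)]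
      simp only [ContinuousLinearMap.add_apply, ContinuousLinearMap.smul_apply,
        smul_eq_mul, Dσ, Dσ']
      ring
    -- CKF equations, simplified
    have hτc : ∀ m : Fin 0 → Euc n, τ x m = τ x E := fun m => by
      congr 1; exact Subsingleton.elim _ _
    have hτc' : ∀ m : Fin 0 → Euc n, τ' x m = τ' x E := fun m => by
      congr 1; exact Subsingleton.elim _ _
    have ckf : ∀ d v : Euc n,
        fderiv ℝ σ x d ![v] = ⟪d, v⟫ * τ x E + ρ x ![d, v] := by
      intro d v
      rw [heq x hx d ![v], Fin.sum_univ_one, consCast_eq]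
      simp [hτc]
    have ckf' : ∀ d v : Euc n,
        fderiv ℝ σ' x d ![v] = ⟪d, v⟫ * τ' x E + ρ' x ![d, v] := by
      intro d v
      rw [heq' x hx d ![v], Fin.sum_univ_one, consCast_eq]
      simp [hτc']
    have lamval : ∀ d : Euc n,
        ((2 * τ x E) • (C (σ' x)) + (2 * τ' x E) • (C (σ x))) d
        = 2 * τ x E * σ' x ![d] + 2 * τ' x E * σ x ![d] := by
      intro d
      simp only [ContinuousLinearMap.add_apply, ContinuousLinearMap.smul_apply, smul_eq_mul]
      rw [hC]
      simp only [ContinuousLinearEquiv.coe_coe, LinearIsometryEquiv.coe_toContinuousLinearEquiv]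
      rw [curry1_apply, curry1_apply]
    rw [prod, prod, prod, lamval, lamval, lamval]
    rw [ckf, ckf, ckf, ckf, ckf, ckf, ckf', ckf', ckf', ckf', ckf', ckf']
    rw [alt2_antisymm (ρ x) (hρa x hx) a b, alt2_antisymm (ρ x) (hρa x hx) b c,
      alt2_antisymm (ρ x) (hρa x hx) a c,
      alt2_antisymm (ρ' x) (hρa' x hx) a b, alt2_antisymm (ρ' x) (hρa' x hx) b c,
      alt2_antisymm (ρ' x) (hρa' x hx) a c]
    rw [real_inner_comm b a, real_inner_comm c b, real_inner_comm c a]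
    ring


/-- The symmetric product `S(x)(a,b) = σ(x)(a)σ'(x)(b) + σ(x)(b)σ'(x)(a)`
of two flat conformal Killing 1-forms has pure-trace symmetrized derivative, i.e. its
trace-free part is a conformal Killing 2-tensor. -/
theorem flat_conformal_killing_one_forms_product_is_conformal_Killing_tensor
    (n : ℕ) (hn : 3 ≤ n)
    (U : Set (Euc n)) (hU : IsOpen U)
    (σ σ' : Euc n → FormML n 1)
    (hσ : FlatCKF n 1 U σ) (hσ' : FlatCKF n 1 U σ') :
    ∃ lam : Euc n → (Euc n →L[ℝ] ℝ),
      ContDiffOn ℝ (⊤ : ℕ∞) lam U ∧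
      ∀ x ∈ U, ∀ a b c : Euc n,
        fderiv ℝ (fun y => σ y ![b] * σ' y ![c] + σ y ![c] * σ' y ![b]) x a
        + fderiv ℝ (fun y => σ y ![c] * σ' y ![a] + σ y ![a] * σ' y ![c]) x b
        + fderiv ℝ (fun y => σ y ![a] * σ' y ![b] + σ y ![b] * σ' y ![a]) x c
        = ⟪a, b⟫ * lam x c + ⟪b, c⟫ * lam x a + ⟪c, a⟫ * lam x b := by
  obtain ⟨hσs, hσa, τ, ρ, hτs, hρs, hτa, hρa, heq⟩ := hσ
  obtain ⟨hσs', hσa', τ', ρ', hτs', hρs', hτa', hρa', heq'⟩ := hσ'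
  exact CKaux_main n hn U hU σ σ' hσs hσs' τ τ' ρ ρ' hτs hτs' hρa hρa' heq heq'
end
end

section
/- Let k ≥ 1 and let f : V^{k+1} → ℝ be a (k+1)-linear map that is alternating in its last k arguments and whose alternation over all k+1 arguments vanishes (f ∈ E(1,k)). Then for all p, v₁, …, vₖ ∈ V: Σ_{π ∈ Sₖ} sgn(π) f(v_{π(1)}, p, v_{π(2)}, …, v_{π(k)}) = (k−1)! · f(p, v₁, …, vₖ). In the paper's index notation: f_{a¹ p ȧᵏ} = (1/k) f_{p ā ᵏ} for f ∈ E(1,k), where sequentially labelled indices are implicitly skewed over. -/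
open scoped BigOperators

/-- Let `f : V^{k+1} → ℝ` be `(k+1)`-linear, alternating in its last
`k` arguments, with vanishing full alternation (`f ∈ E(1,k)`). Then
`Σ_{π ∈ S_k} sgn(π) f(v_{π(1)}, p, v_{π(2)}, …, v_{π(k)}) = (k-1)! · f(p, v₁, …, v_k)`. -/
theorem E1k_swap_identity
    (V : Type*) [AddCommGroup V] [Module ℝ V] [FiniteDimensional ℝ V]
    (k : ℕ) (hk : 1 ≤ k)
    (f : MultilinearMap ℝ (fun _ : Fin (k + 1) => V) ℝ)
    (halt : ∀ (w : Fin (k + 1) → V) (i j : Fin (k + 1)),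
      i ≠ j → 0 < (i : ℕ) → 0 < (j : ℕ) → w i = w j → f w = 0)
    (hfull : ∀ w : Fin (k + 1) → V,
      ∑ π : Equiv.Perm (Fin (k + 1)), ((Equiv.Perm.sign π : ℤ) : ℝ) * f (w ∘ π) = 0) :
    ∀ (p : V) (v : Fin k → V),
      ∑ π : Equiv.Perm (Fin k),
        ((Equiv.Perm.sign π : ℤ) : ℝ) *
          f (fun i : Fin (k + 1) =>
            if h0 : (i : ℕ) = 0 then v (π ⟨0, by omega⟩)
            else if h1 : (i : ℕ) = 1 then p
            else v (π ⟨(i : ℕ) - 1, by have := i.isLt; omega⟩))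
      = ((k - 1).factorial : ℝ) * f (Fin.cons p v) := by
  obtain ⟨m, rfl⟩ : ∃ m, k = m + 1 := ⟨k - 1, (Nat.succ_pred_eq_of_pos hk).symm⟩
  intro p v
  classical
  -- Step A: for fixed first argument, `f` is alternating in the remaining arguments.
  have step_alt : ∀ (u : V) (x : Fin (m + 1) → V) (ρ : Equiv.Perm (Fin (m + 1))),
      f (Fin.cons u (x ∘ ρ)) = ((Equiv.Perm.sign ρ : ℤ) : ℝ) * f (Fin.cons u x) := by
    intro u x ρ
    let g : AlternatingMap ℝ V ℝ (Fin (m + 1)) :=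
      { toMultilinearMap := f.curryLeft u
        map_eq_zero_of_eq' := by
          intro y i j hy hij
          show f (Fin.cons u y) = 0
          refine halt _ i.succ j.succ (fun h => hij (Fin.succ_injective _ h)) ?_ ?_ ?_
          · simp
          · simp
          · simp [hy] }
    have hperm := g.map_perm x ρ
    have h1 : g (x ∘ ρ) = f (Fin.cons u (x ∘ ρ)) := rfl
    have h2 : g x = f (Fin.cons u x) := rfl
    rw [h1, h2] at hperm
    rw [hperm, Units.smul_def, zsmul_eq_mul]
  have hsq : ∀ ρ : Equiv.Perm (Fin (m + 1)),
      ((Equiv.Perm.sign ρ : ℤ) : ℝ) * ((Equiv.Perm.sign ρ : ℤ) : ℝ) = 1 := by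
    intro ρ
    rw [← Int.cast_mul, ← Units.val_mul, Int.units_mul_self]; simp
  set w : Fin (m + 1 + 1) → V := Fin.cons p v with hw
  -- the target summand, as a function of the permutation
  set G : Equiv.Perm (Fin (m + 1)) → ℝ := fun π =>
    ((Equiv.Perm.sign π : ℤ) : ℝ) *
      f (fun i : Fin (m + 1 + 1) =>
        if h0 : (i : ℕ) = 0 then v (π ⟨0, by omega⟩)
        else if h1 : (i : ℕ) = 1 then p
        else v (π ⟨(i : ℕ) - 1, by have := i.isLt; omega⟩)) with hG
  -- rewrite the target summand via `Fin.cons`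
  have hGdesc : ∀ π : Equiv.Perm (Fin (m + 1)),
      G π = ((Equiv.Perm.sign π : ℤ) : ℝ) *
        f (Fin.cons (v (π 0)) (fun j => if j = 0 then p else v (π j))) := by
    intro π
    simp only [hG]
    have harg : (fun i : Fin (m + 1 + 1) =>
        if h0 : (i : ℕ) = 0 then v (π ⟨0, by omega⟩)
        else if h1 : (i : ℕ) = 1 then p
        else v (π ⟨(i : ℕ) - 1, by have := i.isLt; omega⟩)) =
        Fin.cons (v (π 0)) (fun j => if j = 0 then p else v (π j)) := by
      funext i
      refine Fin.cases ?_ (fun j => ?_) i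
      · simp
      · rcases eq_or_ne j 0 with rfl | hj0
        · simp
        · have hv0 : (j : ℕ) ≠ 0 := fun h => hj0 (Fin.ext h)
          have h1 : (j : ℕ) + 1 ≠ 1 := by omega
          simp only [Fin.cons_succ, if_neg hj0, Fin.val_succ, Nat.add_eq_zero, dif_neg,
            h1, dite_false, Nat.add_sub_cancel, Fin.eta, one_ne_zero, and_false, dite_eq_ite,
            if_false]
    rw [harg]
  -- expand the full alternation over `S_{k+1}` via `decomposeFin`
  have h0 := hfull w
  rw [← Equiv.sum_comp Equiv.Perm.decomposeFin.symm
      (fun σ => ((Equiv.Perm.sign σ : ℤ) : ℝ) * f (w ∘ σ)), Fintype.sum_prod_type,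
      Fin.sum_univ_succ] at h0
  -- the i = 0 block: each term is `f w`
  have hblock0 : ∀ π : Equiv.Perm (Fin (m + 1)),
      ((Equiv.Perm.sign (Equiv.Perm.decomposeFin.symm (0, π)) : ℤ) : ℝ) *
        f (w ∘ Equiv.Perm.decomposeFin.symm (0, π)) = f w := by
    intro π
    have harg : w ∘ Equiv.Perm.decomposeFin.symm (0, π) = Fin.cons p (v ∘ π) := by
      funext i
      refine Fin.cases ?_ (fun j => ?_) i
      · simp [Equiv.Perm.decomposeFin_symm_apply_zero, hw]
      · simp [Equiv.Perm.decomposeFin_symm_apply_succ, Equiv.swap_self, hw]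
    rw [harg, step_alt, Equiv.Perm.decomposeFin.symm_sign, if_pos rfl, one_mul, ← mul_assoc,
      hsq, one_mul, hw]
  -- the i = j₀.succ blocks
  have hblock1 : ∀ (j₀ : Fin (m + 1)) (π : Equiv.Perm (Fin (m + 1))),
      ((Equiv.Perm.sign (Equiv.Perm.decomposeFin.symm (j₀.succ, π)) : ℤ) : ℝ) *
        f (w ∘ Equiv.Perm.decomposeFin.symm (j₀.succ, π)) =
      -(G (π * Equiv.swap 0 (π⁻¹ j₀))) := by
    intro j₀ π
    set c : Fin (m + 1) := π⁻¹ j₀ with hc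
    set π' : Equiv.Perm (Fin (m + 1)) := π * Equiv.swap 0 c with hπ'
    have hπ'swap : ∀ x, π' (Equiv.swap 0 c x) = π x := by
      intro x
      simp [hπ', Equiv.Perm.mul_apply, Equiv.swap_apply_self]
    have hπ'0 : π' 0 = j₀ := by
      simp [hπ', Equiv.Perm.mul_apply, Equiv.swap_apply_left, hc]
    have harg : w ∘ Equiv.Perm.decomposeFin.symm (j₀.succ, π) =
        Fin.cons (v (π' 0)) ((fun j => if j = 0 then p else v (π' j)) ∘ Equiv.swap 0 c) := by
      funext i
      refine Fin.cases ?_ (fun j => ?_) i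
      · simp [Equiv.Perm.decomposeFin_symm_apply_zero, hw, hπ'0]
      · simp only [Function.comp_apply, Equiv.Perm.decomposeFin_symm_apply_succ, Fin.cons_succ]
        by_cases hj : π j = j₀
        · have hjc : j = c := by rw [hc, ← hj, Equiv.Perm.inv_def, Equiv.symm_apply_apply]
          have hswap0 : Equiv.swap (0 : Fin (m + 1)) c j = 0 := by
            rw [hjc, Equiv.swap_apply_right]
          rw [hswap0, if_pos rfl, hj, Equiv.swap_apply_right]
          simp [hw]
        · have hjc : j ≠ c := fun h => hj (by rw [h, hc, Equiv.Perm.inv_def, Equiv.apply_symm_apply])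
          have hswap0 : Equiv.swap (0 : Fin (m + 1)) c j ≠ 0 := by
            intro h
            apply hjc
            have := congrArg (Equiv.swap (0 : Fin (m + 1)) c) h
            rwa [Equiv.swap_apply_self, Equiv.swap_apply_left] at this
          rw [if_neg hswap0, hπ'swap]
          have h1 : (π j).succ ≠ 0 := Fin.succ_ne_zero _
          have h2 : (π j).succ ≠ j₀.succ := fun h => hj (Fin.succ_injective _ h)
          rw [Equiv.swap_apply_of_ne_of_ne h1 h2]
          simp [hw]
    rw [harg, step_alt, Equiv.Perm.decomposeFin.symm_sign, if_neg (Fin.succ_ne_zero _),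
      hGdesc π']
    have hsgn : ((Equiv.Perm.sign π' : ℤ) : ℝ) =
        ((Equiv.Perm.sign π : ℤ) : ℝ) * ((Equiv.Perm.sign (Equiv.swap 0 c) : ℤ) : ℝ) := by
      rw [hπ']
      push_cast [Equiv.Perm.sign_mul]
      ring
    rw [hsgn]
    have := hsq (Equiv.swap 0 c)
    push_cast
    nlinarith [this]
  -- sum up the blocks
  rw [Finset.sum_congr rfl (fun π _ => hblock0 π)] at h0
  rw [Finset.sum_congr rfl (fun j₀ _ => Finset.sum_congr rfl (fun π _ => hblock1 j₀ π))] at h0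
  rw [Finset.sum_const, Finset.card_univ, Fintype.card_perm, Fintype.card_fin] at h0
  -- reindex the double sum over the `i ≠ 0` blocks
  have hsum2 : ∑ j₀ : Fin (m + 1), ∑ π : Equiv.Perm (Fin (m + 1)),
      -(G (π * Equiv.swap 0 (π⁻¹ j₀)))
      = ((m : ℝ) + 1) * -(∑ π : Equiv.Perm (Fin (m + 1)), G π) := by
    have hprod1 : ∑ x : Fin (m + 1) × Equiv.Perm (Fin (m + 1)),
        -(G (x.2 * Equiv.swap 0 (x.2⁻¹ x.1)))
        = ∑ j₀ : Fin (m + 1), ∑ π : Equiv.Perm (Fin (m + 1)),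
            -(G (π * Equiv.swap 0 (π⁻¹ j₀))) :=
      Fintype.sum_prod_type _
    have hprod2 : ∑ y : Fin (m + 1) × Equiv.Perm (Fin (m + 1)), -(G y.2)
        = ∑ c : Fin (m + 1), ∑ π : Equiv.Perm (Fin (m + 1)), -(G π) :=
      Fintype.sum_prod_type _
    rw [← hprod1]
    rw [Fintype.sum_equiv
      (⟨fun x => (x.2⁻¹ x.1, x.2 * Equiv.swap 0 (x.2⁻¹ x.1)),
        fun y => (y.2 0, y.2 * Equiv.swap 0 y.1),
        by
          intro ⟨j₀, π⟩
          have h1 : (π * Equiv.swap 0 (π⁻¹ j₀)) 0 = j₀ := by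
            simp [Equiv.Perm.mul_apply, Equiv.swap_apply_left]
          refine Prod.ext ?_ ?_
          · exact h1
          · show π * Equiv.swap 0 (π⁻¹ j₀) * Equiv.swap 0 (π⁻¹ j₀) = π
            rw [mul_assoc, Equiv.swap_mul_self, mul_one],
        by
          intro ⟨c, π'⟩
          have h1 : (π' * Equiv.swap 0 c)⁻¹ (π' 0) = c := by
            simp [mul_inv_rev, Equiv.Perm.mul_apply, Equiv.swap_inv, Equiv.swap_apply_left]
          refine Prod.ext ?_ ?_
          · exact h1
          · show π' * Equiv.swap 0 c * Equiv.swap 0 ((π' * Equiv.swap 0 c)⁻¹ (π' 0)) = π'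
            rw [h1, mul_assoc, Equiv.swap_mul_self, mul_one]⟩ :
          (Fin (m + 1) × Equiv.Perm (Fin (m + 1))) ≃ (Fin (m + 1) × Equiv.Perm (Fin (m + 1))))
      (fun x => -(G (x.2 * Equiv.swap 0 (x.2⁻¹ x.1))))
      (fun y => -(G y.2)) (fun x => rfl)]
    rw [hprod2]
    rw [Finset.sum_const, Finset.card_univ, Fintype.card_fin, ← Finset.sum_neg_distrib,
      nsmul_eq_mul]
    push_cast
    ring
  rw [hsum2, nsmul_eq_mul] at h0
  have hne : (m : ℝ) + 1 ≠ 0 := by positivity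
  have hm1 : m + 1 - 1 = m := by omega
  rw [hm1]
  apply mul_left_cancel₀ hne
  push_cast [Nat.factorial_succ] at h0 ⊢
  linear_combination -h0
end

section
/- Let k ≥ 2 and let f̃ : V^{k+2} → ℝ be a (k+2)-linear map that is alternating in its first two arguments and in its last k arguments, such that the alternation of f̃ over the arguments in positions 2,3,…,k+2 vanishes and the alternation over the arguments in positions 1,2,…,k+1 vanishes (f̃ ∈ E(2,k)). Then for all p, q, v₁, …, vₖ ∈ V: Σ_{π ∈ Sₖ} sgn(π) f̃(v_{π(1)}, q, p, v_{π(2)}, …, v_{π(k)}) = (k−1)! · f̃(p, q, v₁, …, vₖ). In the paper's index notation: f̃_{a¹ q p ȧᵏ} = (1/k) f̃_{p q āᵏ} for f̃ ∈ E(2,k). -/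
open scoped BigOperators

section AuxE2k

variable {V : Type*} [AddCommGroup V] [Module ℝ V]

private lemma E2k_swap2 {k : ℕ} (f : MultilinearMap ℝ (fun _ : Fin (k + 2) => V) ℝ)
    (halt : ∀ w : Fin (k + 2) → V, w 0 = w 1 → f w = 0)
    (a b : V) (z : Fin k → V) :
    f (Fin.cons a (Fin.cons b z)) = - f (Fin.cons b (Fin.cons a z)) := by
  have h0 : ∀ x : V, f (Fin.cons x (Fin.cons x z)) = 0 := fun x => halt _ (by simp)
  have e1 : ∀ (x y : V) (t : Fin (k + 1) → V),
      f (Fin.cons (x + y) t) = f (Fin.cons x t) + f (Fin.cons y t) := by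
    intro x y t
    have h1 : (Fin.cons (x + y) t : Fin (k + 2) → V)
        = Function.update (Fin.cons x t) 0 (x + y) := by
      funext i
      cases i using Fin.cases with
      | zero => simp
      | succ j => simp [Function.update, Fin.succ_ne_zero]
    rw [h1, f.map_update_add, Fin.update_cons_zero, Fin.update_cons_zero]
  have e2 : ∀ (x : V), f (Fin.cons x (Fin.cons (a + b) z))
      = f (Fin.cons x (Fin.cons a z)) + f (Fin.cons x (Fin.cons b z)) := by
    intro x
    have h1 : (Fin.cons x (Fin.cons (a + b) z) : Fin (k + 2) → V)
        = Function.update (Fin.cons x (Fin.cons a z)) (Fin.succ 0) (a + b) := by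
      rw [← Fin.cons_update, Fin.update_cons_zero]
    have h2 : (Fin.cons x (Fin.cons a z) : Fin (k + 2) → V)
        = Function.update (Fin.cons x (Fin.cons a z)) (Fin.succ 0) a := by
      rw [← Fin.cons_update, Fin.update_cons_zero]
    have h3 : (Fin.cons x (Fin.cons b z) : Fin (k + 2) → V)
        = Function.update (Fin.cons x (Fin.cons a z)) (Fin.succ 0) b := by
      rw [← Fin.cons_update, Fin.update_cons_zero]
    rw [h1, f.map_update_add, ← h2, ← h3]
  have h := halt (Fin.cons (a + b) (Fin.cons (a + b) z)) (by simp)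
  rw [e1, e2, e2] at h
  have ha := h0 a
  have hb := h0 b
  linarith

private lemma E2k_blockPerm {k : ℕ} (f : MultilinearMap ℝ (fun _ : Fin (k + 2) => V) ℝ)
    (halt : ∀ (w : Fin (k + 2) → V) (i j : Fin (k + 2)),
      i ≠ j → 2 ≤ (i : ℕ) → 2 ≤ (j : ℕ) → w i = w j → f w = 0)
    (a b : V) (z : Fin k → V) (σ : Equiv.Perm (Fin k)) :
    f (Fin.cons a (Fin.cons b (z ∘ σ)))
      = ((Equiv.Perm.sign σ : ℤ) : ℝ) * f (Fin.cons a (Fin.cons b z)) := by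
  let g : AlternatingMap ℝ V ℝ (Fin k) :=
    { toMultilinearMap := (f.curryLeft a).curryLeft b
      map_eq_zero_of_eq' := by
        intro w i j hw hij
        show f (Fin.cons a (Fin.cons b w)) = 0
        refine halt _ i.succ.succ j.succ.succ ?_ ?_ ?_ ?_
        · exact fun h => hij (Fin.succ_injective _ (Fin.succ_injective _ h))
        · simp only [Fin.val_succ]; omega
        · simp only [Fin.val_succ]; omega
        · simp [hw] }
  have hg : ∀ u : Fin k → V, g u = f (Fin.cons a (Fin.cons b u)) := fun u => rfl
  have hp := g.map_perm z σ
  rw [hg, hg] at hp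
  rw [hp, Units.smul_def, zsmul_eq_mul]

private lemma E2k_star {k : ℕ} (f : MultilinearMap ℝ (fun _ : Fin (k + 2) => V) ℝ)
    (halt2 : ∀ (w : Fin (k + 2) → V) (i j : Fin (k + 2)),
      i ≠ j → 2 ≤ (i : ℕ) → 2 ≤ (j : ℕ) → w i = w j → f w = 0)
    (p q : V) (v : Fin k → V)
    (h : ∑ π : Equiv.Perm (Fin (k + 1)),
        ((Equiv.Perm.sign π : ℤ) : ℝ) *
          f (fun i : Fin (k + 2) =>
            if h0 : (i : ℕ) = 0 then (Fin.cons q (Fin.cons p v) : Fin (k + 2) → V) i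
            else (Fin.cons q (Fin.cons p v) : Fin (k + 2) → V)
              (π ⟨(i : ℕ) - 1, by have := i.isLt; omega⟩).succ) = 0) :
    ∑ m : Fin k, f (Fin.cons q (Fin.cons (v m) (fun i => if i = m then p else v i)))
      = f (Fin.cons q (Fin.cons p v)) := by
  classical
  have hsq : ∀ e : Equiv.Perm (Fin k),
      ((Equiv.Perm.sign e : ℤ) : ℝ) * ((Equiv.Perm.sign e : ℤ) : ℝ) = 1 := by
    intro e
    rcases Int.units_eq_one_or (Equiv.Perm.sign e) with hs | hs <;> rw [hs] <;> norm_num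
  have h2 : ∑ π : Equiv.Perm (Fin (k + 1)),
      ((Equiv.Perm.sign π : ℤ) : ℝ) * f (Fin.cons q (Fin.cons p v ∘ π)) = 0 := by
    rw [← h]
    refine Finset.sum_congr rfl fun π _ => ?_
    have harg : (fun i : Fin (k + 2) =>
        if h0 : (i : ℕ) = 0 then (Fin.cons q (Fin.cons p v) : Fin (k + 2) → V) i
        else (Fin.cons q (Fin.cons p v) : Fin (k + 2) → V)
          (π ⟨(i : ℕ) - 1, by have := i.isLt; omega⟩).succ)
        = Fin.cons q (Fin.cons p v ∘ π) := by
      funext i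
      cases i using Fin.cases with
      | zero => simp
      | succ j =>
        rw [dif_neg (by simp : ¬ ((Fin.succ j : Fin (k + 2)) : ℕ) = 0)]
        have hj : (⟨((Fin.succ j : Fin (k + 2)) : ℕ) - 1,
            by have := (Fin.succ j : Fin (k + 2)).isLt; omega⟩ : Fin (k + 1)) = j := by
          ext
          simp
        rw [hj, Fin.cons_succ, Fin.cons_succ, Function.comp_apply]
    rw [harg]
  have h3 : ∑ x : Fin (k + 1) × Equiv.Perm (Fin k),
      ((Equiv.Perm.sign (Equiv.Perm.decomposeFin.symm x) : ℤ) : ℝ) *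
        f (Fin.cons q (Fin.cons p v ∘ Equiv.Perm.decomposeFin.symm x)) = 0 := by
    rw [Fintype.sum_equiv Equiv.Perm.decomposeFin.symm _
      (fun π : Equiv.Perm (Fin (k + 1)) =>
        ((Equiv.Perm.sign π : ℤ) : ℝ) * f (Fin.cons q (Fin.cons p v ∘ π)))
      (fun x => rfl)]
    exact h2
  rw [Fintype.sum_prod_type] at h3
  rw [Fin.sum_univ_succ] at h3
  have hzero : ∀ e : Equiv.Perm (Fin k),
      ((Equiv.Perm.sign (Equiv.Perm.decomposeFin.symm ((0 : Fin (k + 1)), e)) : ℤ) : ℝ) *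
        f (Fin.cons q (Fin.cons p v ∘ Equiv.Perm.decomposeFin.symm ((0 : Fin (k + 1)), e)))
      = f (Fin.cons q (Fin.cons p v)) := by
    intro e
    have hsgn : Equiv.Perm.sign (Equiv.Perm.decomposeFin.symm ((0 : Fin (k + 1)), e))
        = Equiv.Perm.sign e := by
      rw [Equiv.Perm.decomposeFin.symm_sign, if_pos rfl, one_mul]
    have harg : (Fin.cons p v ∘ Equiv.Perm.decomposeFin.symm ((0 : Fin (k + 1)), e)
        : Fin (k + 1) → V) = Fin.cons p (v ∘ e) := by
      funext i
      cases i using Fin.cases with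
      | zero => simp [Equiv.Perm.decomposeFin_symm_apply_zero]
      | succ j => simp [Equiv.Perm.decomposeFin_symm_apply_succ, Equiv.swap_self]
    rw [hsgn, harg, E2k_blockPerm f halt2 q p v e, ← mul_assoc, hsq e, one_mul]
  have hsucc : ∀ (m : Fin k) (e : Equiv.Perm (Fin k)),
      ((Equiv.Perm.sign (Equiv.Perm.decomposeFin.symm ((Fin.succ m : Fin (k + 1)), e)) : ℤ) : ℝ) *
        f (Fin.cons q (Fin.cons p v ∘ Equiv.Perm.decomposeFin.symm ((Fin.succ m : Fin (k + 1)), e)))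
      = -f (Fin.cons q (Fin.cons (v m) (fun i => if i = m then p else v i))) := by
    intro m e
    have hsgn : Equiv.Perm.sign (Equiv.Perm.decomposeFin.symm ((Fin.succ m : Fin (k + 1)), e))
        = - Equiv.Perm.sign e := by
      rw [Equiv.Perm.decomposeFin.symm_sign, if_neg (Fin.succ_ne_zero m), neg_one_mul]
    have harg : (Fin.cons p v ∘ Equiv.Perm.decomposeFin.symm ((Fin.succ m : Fin (k + 1)), e)
        : Fin (k + 1) → V) = Fin.cons (v m) ((fun i => if i = m then p else v i) ∘ e) := by
      funext i
      cases i using Fin.cases with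
      | zero => simp [Equiv.Perm.decomposeFin_symm_apply_zero]
      | succ j =>
        rw [Function.comp_apply, Equiv.Perm.decomposeFin_symm_apply_succ, Fin.cons_succ,
          Function.comp_apply]
        by_cases hje : e j = m
        · rw [hje, Equiv.swap_apply_right, Fin.cons_zero, if_pos rfl]
        · rw [Equiv.swap_apply_of_ne_of_ne (Fin.succ_ne_zero _)
            (by simpa [Fin.succ_inj] using hje), Fin.cons_succ, if_neg hje]
    rw [hsgn, harg, E2k_blockPerm f halt2 q (v m) _ e]
    push_cast
    rw [← mul_assoc]
    rw [neg_mul, hsq e, neg_one_mul]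
  simp only [hzero, hsucc] at h3
  simp only [Finset.sum_const, Finset.card_univ, Fintype.card_perm, Fintype.card_fin,
    nsmul_eq_mul, mul_neg] at h3
  have hk : (0 : ℝ) < k.factorial := by
    exact_mod_cast Nat.cast_pos.mpr (Nat.factorial_pos k)
  rw [Finset.sum_neg_distrib, ← Finset.mul_sum] at h3
  exact mul_left_cancel₀ (ne_of_gt hk) (by linarith)

private lemma E2k_hA {n : ℕ} (f : MultilinearMap ℝ (fun _ : Fin (n + 4) => V) ℝ)
    (haltfirst : ∀ w : Fin (n + 4) → V, w 0 = w 1 → f w = 0)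
    (haltlast : ∀ (w : Fin (n + 4) → V) (i j : Fin (n + 4)),
      i ≠ j → 2 ≤ (i : ℕ) → 2 ≤ (j : ℕ) → w i = w j → f w = 0)
    (p q : V) (v : Fin (n + 2) → V) (j : Fin (n + 2)) :
    (if j = 0 then (1 : ℝ) else -1) *
      f (Fin.cons (v j) (Fin.cons q
        (Fin.cons p (fun i : Fin (n + 1) => v (Equiv.swap 0 j i.succ)))))
    = - f (Fin.cons q (Fin.cons (v j) (fun i => if i = j then p else v i))) := by
  have hswap2 : ∀ (a : V) (t : Fin (n + 2) → V),
      f (Fin.cons a (Fin.cons q t)) = - f (Fin.cons q (Fin.cons a t)) := fun a t =>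
    E2k_swap2 (k := n + 2) f haltfirst a q t
  cases j using Fin.cases with
  | zero =>
    rw [if_pos rfl, one_mul]
    have hy : (Fin.cons p (fun i : Fin (n + 1) => v (Equiv.swap 0 (0 : Fin (n + 2)) i.succ))
        : Fin (n + 2) → V) = fun i => if i = 0 then p else v i := by
      funext i
      cases i using Fin.cases with
      | zero => simp
      | succ i => simp [Equiv.swap_self, Fin.cons_succ, Fin.succ_ne_zero]
    rw [hy, hswap2 (v 0) _]
  | succ m =>
    rw [if_neg (Fin.succ_ne_zero m)]
    have hy : (fun i : Fin (n + 2) => if i = Fin.succ m then p else v i)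
        = (Fin.cons p (fun i : Fin (n + 1) => v (Equiv.swap 0 (Fin.succ m) i.succ))
            : Fin (n + 2) → V) ∘ (Equiv.swap (0 : Fin (n + 2)) (Fin.succ m)) := by
      funext i
      rcases eq_or_ne i 0 with rfl | hi0
      · rw [Function.comp_apply, Equiv.swap_apply_left, if_neg (Ne.symm (Fin.succ_ne_zero m))]
        cases hm : Fin.succ m using Fin.cases with
        | zero => exact absurd hm (Fin.succ_ne_zero m)
        | succ m' =>
          rw [Fin.cons_succ]
          rw [← hm, Equiv.swap_apply_right]
      · rcases eq_or_ne i (Fin.succ m) with rfl | hij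
        · rw [Function.comp_apply, Equiv.swap_apply_right, Fin.cons_zero, if_pos rfl]
        · rw [Function.comp_apply, Equiv.swap_apply_of_ne_of_ne hi0 hij, if_neg hij]
          cases i using Fin.cases with
          | zero => exact absurd rfl hi0
          | succ i' =>
            rw [Fin.cons_succ, Equiv.swap_apply_of_ne_of_ne hi0 hij]
    have hb := E2k_blockPerm (k := n + 2) f haltlast (v (Fin.succ m)) q
      (Fin.cons p (fun i : Fin (n + 1) => v (Equiv.swap 0 (Fin.succ m) i.succ)))
      (Equiv.swap (0 : Fin (n + 2)) (Fin.succ m))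
    rw [Equiv.Perm.sign_swap (Ne.symm (Fin.succ_ne_zero m))] at hb
    have hyv : f (Fin.cons q (Fin.cons (v (Fin.succ m))
          (fun i => if i = Fin.succ m then p else v i)))
        = f (Fin.cons (v (Fin.succ m)) (Fin.cons q
            (Fin.cons p (fun i : Fin (n + 1) => v (Equiv.swap 0 (Fin.succ m) i.succ))))) := by
      rw [hswap2 (v (Fin.succ m)) _]
      rw [show (Fin.cons q (Fin.cons (v (Fin.succ m))
          (fun i => if i = Fin.succ m then p else v i)) : Fin (n + 4) → V)
        = Fin.cons q (Fin.cons (v (Fin.succ m))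
          ((Fin.cons p (fun i : Fin (n + 1) => v (Equiv.swap 0 (Fin.succ m) i.succ))
            : Fin (n + 2) → V) ∘ (Equiv.swap (0 : Fin (n + 2)) (Fin.succ m)))) from by rw [← hy]]
      rw [E2k_blockPerm (k := n + 2) f haltlast q (v (Fin.succ m)) _ _,
        Equiv.Perm.sign_swap (Ne.symm (Fin.succ_ne_zero m))]
      push_cast
      ring
    rw [hyv]
    ring

end AuxE2k

/-- Let `f̃ : V^{k+2} → ℝ` be `(k+2)`-linear (`k ≥ 2`), alternating in
its first two and in its last `k` arguments, such that the alternation over arguments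
`2,…,k+2` vanishes and the alternation over arguments `1,…,k+1` vanishes
(`f̃ ∈ E(2,k)`). Then
`Σ_{π ∈ S_k} sgn(π) f̃(v_{π(1)}, q, p, v_{π(2)}, …, v_{π(k)}) = (k-1)! · f̃(p,q,v₁,…,v_k)`. -/
theorem E2k_swap_identity
    (V : Type*) [AddCommGroup V] [Module ℝ V] [FiniteDimensional ℝ V]
    (k : ℕ) (hk : 2 ≤ k)
    (f : MultilinearMap ℝ (fun _ : Fin (k + 2) => V) ℝ)
    (haltfirst : ∀ w : Fin (k + 2) → V, w 0 = w 1 → f w = 0)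
    (haltlast : ∀ (w : Fin (k + 2) → V) (i j : Fin (k + 2)),
      i ≠ j → 2 ≤ (i : ℕ) → 2 ≤ (j : ℕ) → w i = w j → f w = 0)
    (hlast : ∀ w : Fin (k + 2) → V,
      ∑ π : Equiv.Perm (Fin (k + 1)),
        ((Equiv.Perm.sign π : ℤ) : ℝ) *
          f (fun i : Fin (k + 2) =>
            if h0 : (i : ℕ) = 0 then w i
            else w (π ⟨(i : ℕ) - 1, by have := i.isLt; omega⟩).succ) = 0)
    (hfirst : ∀ w : Fin (k + 2) → V,
      ∑ π : Equiv.Perm (Fin (k + 1)),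
        ((Equiv.Perm.sign π : ℤ) : ℝ) *
          f (fun i : Fin (k + 2) =>
            if h : (i : ℕ) < k + 1 then w (π ⟨(i : ℕ), h⟩).castSucc
            else w i) = 0) :
    ∀ (p q : V) (v : Fin k → V),
      ∑ π : Equiv.Perm (Fin k),
        ((Equiv.Perm.sign π : ℤ) : ℝ) *
          f (fun i : Fin (k + 2) =>
            if h0 : (i : ℕ) = 0 then v (π ⟨0, by omega⟩)
            else if h1 : (i : ℕ) = 1 then q
            else if h2 : (i : ℕ) = 2 then p
            else v (π ⟨(i : ℕ) - 2, by have := i.isLt; omega⟩))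
      = ((k - 1).factorial : ℝ) * f (Fin.cons p (Fin.cons q v)) := by
  intro p q v
  obtain ⟨n, rfl⟩ : ∃ n, k = n + 2 := ⟨k - 2, by omega⟩
  have hstar := E2k_star (k := n + 2) f haltlast p q v (hlast (Fin.cons q (Fin.cons p v)))
  have hsq : ∀ e : Equiv.Perm (Fin (n + 1)),
      ((Equiv.Perm.sign e : ℤ) : ℝ) * ((Equiv.Perm.sign e : ℤ) : ℝ) = 1 := by
    intro e
    rcases Int.units_eq_one_or (Equiv.Perm.sign e) with hs | hs <;> rw [hs] <;> norm_num
  have hterm : ∀ ρ : Equiv.Perm (Fin (n + 2)),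
      (fun i : Fin (n + 2 + 2) =>
        if h0 : (i : ℕ) = 0 then v (ρ ⟨0, by omega⟩)
        else if h1 : (i : ℕ) = 1 then q
        else if h2 : (i : ℕ) = 2 then p
        else v (ρ ⟨(i : ℕ) - 2, by have := i.isLt; omega⟩))
      = Fin.cons (v (ρ 0)) (Fin.cons q (Fin.cons p
          (fun i : Fin (n + 1) => v (ρ i.succ)))) := by
    intro ρ
    funext i
    cases i using Fin.cases with
    | zero => simp
    | succ j =>
      cases j using Fin.cases with
      | zero => simp
      | succ l =>
        cases l using Fin.cases with
        | zero =>
          rw [dif_neg (by simp only [Fin.val_succ, Fin.val_zero]; omega),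
            dif_neg (by simp only [Fin.val_succ, Fin.val_zero]; omega),
            dif_pos (by simp only [Fin.val_succ, Fin.val_zero])]
          rw [Fin.cons_succ, Fin.cons_succ, Fin.cons_zero]
        | succ j2 =>
          rw [dif_neg (by simp only [Fin.val_succ]; omega),
            dif_neg (by simp only [Fin.val_succ]; omega),
            dif_neg (by simp only [Fin.val_succ]; omega)]
          simp only [Fin.cons_succ]
          have hj : (⟨((Fin.succ (Fin.succ (Fin.succ j2)) : Fin (n + 2 + 2)) : ℕ) - 2,
              by have := (Fin.succ (Fin.succ (Fin.succ j2)) : Fin (n + 2 + 2)).isLt; omega⟩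
                : Fin (n + 2)) = Fin.succ j2 := by
            ext
            simp only [Fin.val_succ]
            omega
          rw [hj]
  have step0 : (∑ ρ : Equiv.Perm (Fin (n + 2)),
      ((Equiv.Perm.sign ρ : ℤ) : ℝ) *
        f (fun i : Fin (n + 2 + 2) =>
          if h0 : (i : ℕ) = 0 then v (ρ ⟨0, by omega⟩)
          else if h1 : (i : ℕ) = 1 then q
          else if h2 : (i : ℕ) = 2 then p
          else v (ρ ⟨(i : ℕ) - 2, by have := i.isLt; omega⟩)))
      = ∑ ρ : Equiv.Perm (Fin (n + 2)),
        ((Equiv.Perm.sign ρ : ℤ) : ℝ) *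
          f (Fin.cons (v (ρ 0)) (Fin.cons q (Fin.cons p
            (fun i : Fin (n + 1) => v (ρ i.succ))))) :=
    Finset.sum_congr rfl fun ρ _ => by rw [hterm ρ]
  have step1 : (∑ ρ : Equiv.Perm (Fin (n + 2)),
      ((Equiv.Perm.sign ρ : ℤ) : ℝ) *
        f (Fin.cons (v (ρ 0)) (Fin.cons q (Fin.cons p
          (fun i : Fin (n + 1) => v (ρ i.succ))))))
      = ((n + 1).factorial : ℝ) * f (Fin.cons p (Fin.cons q v)) := by
    rw [(Fintype.sum_equiv Equiv.Perm.decomposeFin.symm _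
      (fun ρ : Equiv.Perm (Fin (n + 2)) =>
        ((Equiv.Perm.sign ρ : ℤ) : ℝ) *
          f (Fin.cons (v (ρ 0)) (Fin.cons q (Fin.cons p
            (fun i : Fin (n + 1) => v (ρ i.succ)))))) (fun x => rfl)).symm]
    rw [Fintype.sum_prod_type]
    have hje : ∀ (j : Fin (n + 2)) (e : Equiv.Perm (Fin (n + 1))),
        ((Equiv.Perm.sign (Equiv.Perm.decomposeFin.symm (j, e)) : ℤ) : ℝ) *
          f (Fin.cons (v (Equiv.Perm.decomposeFin.symm (j, e) 0)) (Fin.cons q (Fin.cons p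
            (fun i : Fin (n + 1) => v (Equiv.Perm.decomposeFin.symm (j, e) i.succ)))))
        = - f (Fin.cons q (Fin.cons (v j) (fun i => if i = j then p else v i))) := by
      intro j e
      have htail : (fun i : Fin (n + 1) => v (Equiv.Perm.decomposeFin.symm (j, e) i.succ))
          = fun i : Fin (n + 1) => v (Equiv.swap 0 j (e i).succ) := by
        funext i
        rw [Equiv.Perm.decomposeFin_symm_apply_succ]
      have hblk : (Fin.cons p (fun i : Fin (n + 1) => v (Equiv.swap 0 j (e i).succ))
          : Fin (n + 2) → V)
          = (Fin.cons p (fun i : Fin (n + 1) => v (Equiv.swap 0 j i.succ))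
              : Fin (n + 2) → V) ∘ (Equiv.Perm.decomposeFin.symm ((0 : Fin (n + 2)), e)) := by
        funext i
        cases i using Fin.cases with
        | zero => simp [Equiv.Perm.decomposeFin_symm_apply_zero]
        | succ i =>
          simp [Equiv.Perm.decomposeFin_symm_apply_succ, Equiv.swap_self, Fin.cons_succ]
      have hsgn0 : Equiv.Perm.sign (Equiv.Perm.decomposeFin.symm ((0 : Fin (n + 2)), e))
          = Equiv.Perm.sign e := by
        rw [Equiv.Perm.decomposeFin.symm_sign, if_pos rfl, one_mul]
      rw [Equiv.Perm.decomposeFin_symm_apply_zero, htail, hblk,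
        E2k_blockPerm (k := n + 2) f haltlast (v j) q _ _, hsgn0,
        Equiv.Perm.decomposeFin.symm_sign]
      have hA := E2k_hA f haltfirst haltlast p q v j
      rw [← hA]
      simp only [Units.val_mul, Int.cast_mul,
        apply_ite (fun u : ℤˣ => ((u : ℤ) : ℝ)), Units.val_one, Units.val_neg,
        Int.cast_one, Int.cast_neg]
      rw [show ((if j = 0 then (1:ℝ) else -1) * ((Equiv.Perm.sign e : ℤ) : ℝ)) *
          (((Equiv.Perm.sign e : ℤ) : ℝ) *
            f (Fin.cons (v j) (Fin.cons q (Fin.cons p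
              (fun i : Fin (n + 1) => v (Equiv.swap 0 j i.succ))))))
        = (((Equiv.Perm.sign e : ℤ) : ℝ) * ((Equiv.Perm.sign e : ℤ) : ℝ)) *
          ((if j = 0 then (1:ℝ) else -1) *
            f (Fin.cons (v j) (Fin.cons q (Fin.cons p
              (fun i : Fin (n + 1) => v (Equiv.swap 0 j i.succ)))))) from by ring]
      rw [hsq e, one_mul]
    simp only [hje]
    simp only [Finset.sum_const, Finset.card_univ, Fintype.card_perm, Fintype.card_fin,
      nsmul_eq_mul, mul_neg]
    rw [Finset.sum_neg_distrib, ← Finset.mul_sum, hstar,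
      E2k_swap2 (k := n + 2) f haltfirst p q v]
    ring
  exact step0.trans step1
end
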